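/- There exists ε ∈ [0,1] with the following property. Assign to each edge of the grid graph on ℤ² an independent random weight that equals 1−ε or 1+ε, each with probability 1/2. Then: (i) for every integer m ≥ 1, E[monodist_w((0,0),(m,0))] = m; and (ii) the sequence E[monodist_w((0,0),(m,m))]/m converges to √2 as m → ∞. Consequently, the expected monotone-path distance normalized by Euclidean distance tends to 1 both in the axis direction and in the diagonal direction. -/

import Mathlib

open MeasureTheory ProbabilityTheory

/-- Vertices of the grid graph: integer points of the plane. -/
abbrev V : Type := ℤ × ℤ

/-- Adjacency in the grid graph: `u` and `v` are joined iff `‖u - v‖₁ = 1`. -/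
def gridAdj (u v : V) : Prop := |u.1 - v.1| + |u.2 - v.2| = 1

/-- The weight of a walk (list of vertices): the sum of `w` over consecutive pairs. -/
noncomputable def walkWeight (w : V → V → ℝ) (p : List V) : ℝ :=
  (List.zipWith w p p.tail).sum

/-- `p` is a monotone walk from `u` to `v`: a walk in the grid graph using exactly
`‖u - v‖₁` edges. -/
def IsMonoWalk (u v : V) (p : List V) : Prop :=
  p.Chain' gridAdj ∧ p.head? = some u ∧ p.getLast? = some v ∧
    p.length = (|u.1 - v.1| + |u.2 - v.2|).toNat + 1

/-- The monotone-path distance: the infimum of weights of monotone walks. -/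
noncomputable def monoDist (w : V → V → ℝ) (u v : V) : ℝ :=
  sInf { c | ∃ p : List V, IsMonoWalk u v p ∧ c = walkWeight w p }

/-- A canonical orientation of the edges of the grid graph: the pair `(v, b)` denotes
the edge from `v` to its East neighbour (if `b = true`) or North neighbour
(if `b = false`); every undirected edge occurs exactly once. -/
def edgeOf : V × Bool → V × V :=
  fun e => (e.1, if e.2 then (e.1.1 + 1, e.1.2) else (e.1.1, e.1.2 + 1))

namespace S9

def L1 (u v : V) : ℕ := (u.1 - v.1).natAbs + (u.2 - v.2).natAbs

lemma gridAdj_iff (u v : V) : gridAdj u v ↔ (u.1 - v.1).natAbs + (u.2 - v.2).natAbs = 1 := by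
  rw [gridAdj, Int.abs_eq_natAbs, Int.abs_eq_natAbs]
  constructor <;> intro h <;> omega

lemma isMonoWalk_length {u v : V} {p : List V} (h : IsMonoWalk u v p) :
    p.length = L1 u v + 1 := by
  have := h.2.2.2
  rw [Int.abs_eq_natAbs, Int.abs_eq_natAbs] at this
  rw [this, L1]; omega

def step (u : V) (b : Bool) : V := if b then (u.1 + 1, u.2) else (u.1, u.2 + 1)

def pathOf : V → List Bool → List V
  | u, [] => [u]
  | u, b :: d => u :: pathOf (step u b) d

def endOf : V → List Bool → V
  | u, [] => u
  | u, b :: d => endOf (step u b) d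

noncomputable def weightOf (w : V → V → ℝ) : V → List Bool → ℝ
  | _, [] => 0
  | u, b :: d => w u (step u b) + weightOf w (step u b) d

lemma gridAdj_step (u : V) (b : Bool) : gridAdj u (step u b) := by
  cases b <;> simp [gridAdj, step]

lemma pathOf_ne_nil (u : V) (d : List Bool) : pathOf u d ≠ [] := by
  cases d <;> simp [pathOf]

lemma head?_pathOf (u : V) (d : List Bool) : (pathOf u d).head? = some u := by
  cases d <;> simp [pathOf]

lemma length_pathOf (u : V) (d : List Bool) : (pathOf u d).length = d.length + 1 := by
  induction d generalizing u with
  | nil => simp [pathOf]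
  | cons b d ih => simp [pathOf, ih]

lemma getLast?_pathOf (u : V) (d : List Bool) : (pathOf u d).getLast? = some (endOf u d) := by
  induction d generalizing u with
  | nil => simp [pathOf, endOf]
  | cons b d ih =>
      rw [pathOf, List.getLast?_cons, ih (step u b)]
      simp [endOf]

lemma chain'_pathOf (u : V) (d : List Bool) : (pathOf u d).Chain' gridAdj := by
  induction d generalizing u with
  | nil => simp [pathOf, List.Chain', List.isChain_singleton]
  | cons b d ih =>
      rw [pathOf, List.Chain', List.isChain_cons]
      refine ⟨fun y hy => ?_, ih _⟩
      rw [head?_pathOf] at hy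
      cases hy
      exact gridAdj_step u b
  
lemma endOf_eq (u : V) (d : List Bool) :
    endOf u d = (u.1 + d.count true, u.2 + d.count false) := by
  induction d generalizing u with
  | nil => simp [endOf]
  | cons b d ih =>
      rw [endOf, ih]
      cases b <;> simp [step, List.count_cons] <;> ring_nf <;> simp [Prod.ext_iff] <;> ring
  
lemma count_true_add_count_false (d : List Bool) : d.count true + d.count false = d.length := by
  induction d with
  | nil => simp
  | cons b d ih => cases b <;> simp [List.count_cons] <;> omega

lemma walkWeight_pathOf (w : V → V → ℝ) (u : V) (d : List Bool) :
    walkWeight w (pathOf u d) = weightOf w u d := by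
  induction d generalizing u with
  | nil => simp [pathOf, walkWeight, weightOf]
  | cons b d ih =>
      rw [pathOf, weightOf, ← ih (step u b)]
      have h2 : (pathOf (step u b) d).head? = some (step u b) := head?_pathOf _ _
      obtain ⟨t, ht⟩ : ∃ t, pathOf (step u b) d = step u b :: t := by
        cases hp : pathOf (step u b) d with
        | nil => exact absurd hp (pathOf_ne_nil _ _)
        | cons x t => rw [hp] at h2; simp at h2; exact ⟨t, by rw [h2]⟩
      rw [ht]
      simp [walkWeight]

lemma length_ge (p : List V) : ∀ u v : V, p.Chain' gridAdj → p.head? = some u →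
    p.getLast? = some v → L1 u v + 1 ≤ p.length := by
  induction p with
  | nil => intro u v _ h; simp at h
  | cons x t ih =>
      intro u v hc hh hl
      simp at hh; subst hh
      cases t with
      | nil =>
          simp at hl; subst hl; simp [L1]
      | cons y t' =>
          rw [List.Chain', List.isChain_cons_cons] at hc
          rw [List.getLast?_cons_cons] at hl
          have h1 := ih y v hc.2 (by simp) hl
          have h2 := (gridAdj_iff x y).1 hc.1
          simp only [List.length_cons] at *
          simp only [L1] at *
          omega

lemma exists_pathOf : ∀ (p : List V) (u v : V), u.1 ≤ v.1 → u.2 ≤ v.2 →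
    p.Chain' gridAdj → p.head? = some u → p.getLast? = some v → p.length = L1 u v + 1 →
    ∃ d : List Bool, endOf u d = v ∧ p = pathOf u d := by
  intro p
  induction p with
  | nil => intro u v _ _ _ h; simp at h
  | cons x t ih =>
      intro u v hu1 hu2 hc hh hl hlen
      simp at hh; subst hh
      cases t with
      | nil =>
          simp at hl; subst hl
          exact ⟨[], rfl, rfl⟩
      | cons y t' =>
          rw [List.Chain', List.isChain_cons_cons] at hc
          rw [List.getLast?_cons_cons] at hl
          have hge := length_ge (y :: t') y v hc.2 (by simp) hl
          have hadj := (gridAdj_iff x y).1 hc.1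
          simp only [List.length_cons] at hlen hge
          have hcase : (y.1 = x.1 + 1 ∧ y.2 = x.2) ∨ (y.1 = x.1 ∧ y.2 = x.2 + 1) := by
            simp only [L1] at *; omega
          have hkey : y.1 ≤ v.1 ∧ y.2 ≤ v.2 ∧ (y :: t').length = L1 y v + 1 := by
            rcases hcase with ⟨h1, h2⟩ | ⟨h1, h2⟩ <;>
              (simp only [L1, List.length_cons] at *; omega)
          obtain ⟨b, hb⟩ : ∃ b : Bool, y = step x b := by
            rcases hcase with ⟨h1, h2⟩ | ⟨h1, h2⟩
            · exact ⟨true, Prod.ext h1 h2⟩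
            · exact ⟨false, Prod.ext h1 h2⟩
          obtain ⟨d, hd1, hd2⟩ := ih y v hkey.1 hkey.2.1 hc.2 (by simp) hl hkey.2.2
          subst hb
          exact ⟨b :: d, hd1, by rw [pathOf, hd2]⟩

def PathsF (N a : ℕ) : Finset (List Bool) :=
  ((Finset.univ : Finset (Fin N → Bool)).image List.ofFn).filter (fun d => d.count true = a)

lemma mem_PathsF {N a : ℕ} {d : List Bool} :
    d ∈ PathsF N a ↔ d.length = N ∧ d.count true = a := by
  simp only [PathsF, Finset.mem_filter, Finset.mem_image, Finset.mem_univ, true_and]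
  constructor
  · rintro ⟨⟨f, rfl⟩, h⟩; exact ⟨by simp, h⟩
  · rintro ⟨h1, h2⟩
    subst h1
    exact ⟨⟨d.get, List.ofFn_get d⟩, h2⟩

lemma PathsF_nonempty (m n : ℕ) : (PathsF (m + n) m).Nonempty := by
  refine ⟨List.replicate m true ++ List.replicate n false, ?_⟩
  rw [mem_PathsF]
  constructor
  · simp
  · simp [List.count_append, List.count_replicate]

lemma monoWalk_set_eq (w : V → V → ℝ) (u v : V) (h1 : u.1 ≤ v.1) (h2 : u.2 ≤ v.2) :
    { c | ∃ p : List V, IsMonoWalk u v p ∧ c = walkWeight w p } =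
      ↑((PathsF ((v.1 - u.1).toNat + (v.2 - u.2).toNat) ((v.1 - u.1).toNat)).image
          (weightOf w u)) := by
  have hL : L1 u v = (v.1 - u.1).toNat + (v.2 - u.2).toNat := by
    simp only [L1]; omega
  ext c
  simp only [Set.mem_setOf_eq, Finset.coe_image, Set.mem_image, Finset.mem_coe]
  constructor
  · rintro ⟨p, hp, rfl⟩
    obtain ⟨d, hd1, hd2⟩ := exists_pathOf p u v h1 h2 hp.1 hp.2.1 hp.2.2.1
      (isMonoWalk_length hp)
    have hlen : d.length = L1 u v := by
      have := isMonoWalk_length hp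
      rw [hd2, length_pathOf] at this; omega
    have hcount := count_true_add_count_false d
    have hend := endOf_eq u d
    rw [hd1] at hend
    have hct : d.count true = (v.1 - u.1).toNat := by
      have := congrArg Prod.fst hend; simp at this; omega
    refine ⟨d, ?_, by rw [hd2, walkWeight_pathOf]⟩
    rw [mem_PathsF]; omega
  · rintro ⟨d, hd, rfl⟩
    rw [mem_PathsF] at hd
    refine ⟨pathOf u d, ⟨chain'_pathOf u d, head?_pathOf u d, ?_, ?_⟩,
      (walkWeight_pathOf w u d).symm⟩
    · rw [getLast?_pathOf, endOf_eq]
      have hcount := count_true_add_count_false d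
      have : (d.count false : ℤ) = v.2 - u.2 ∧ (d.count true : ℤ) = v.1 - u.1 := by omega
      rw [this.1, this.2]
      simp [Prod.ext_iff]
    · rw [length_pathOf, Int.abs_eq_natAbs, Int.abs_eq_natAbs]
      omega

lemma monoDist_eq (w : V → V → ℝ) (u v : V) (h1 : u.1 ≤ v.1) (h2 : u.2 ≤ v.2) :
    monoDist w u v = ((PathsF ((v.1 - u.1).toNat + (v.2 - u.2).toNat)
        ((v.1 - u.1).toNat)).image (weightOf w u)).min'
        ((PathsF_nonempty _ _).image _) := by
  rw [monoDist, monoWalk_set_eq w u v h1 h2]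
  exact Finset.Nonempty.csInf_eq_min' _


-- appended to comb.lean content (namespace S9 still open in final file)
noncomputable def valOf (ε : ℝ) (b : Bool) : ℝ := if b then 1 + ε else 1 - ε

noncomputable def sgn (b : Bool) : ℝ := if b then 1 else -1

lemma valOf_eq (ε : ℝ) (b : Bool) : valOf ε b = 1 + ε * sgn b := by
  cases b <;> simp [valOf, sgn] <;> ring

noncomputable def wEta (ε : ℝ) (η : V × Bool → Bool) : V → V → ℝ :=
  fun x y => if y = (x.1 + 1, x.2) then valOf ε (η (x, true)) else valOf ε (η (x, false))

lemma wEta_step (ε : ℝ) (η : V × Bool → Bool) (x : V) (b : Bool) :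
    wEta ε η x (step x b) = valOf ε (η (x, b)) := by
  cases b <;> simp [wEta, step, Prod.ext_iff]

noncomputable def sgnSum (η : V × Bool → Bool) : V → List Bool → ℝ
  | _, [] => 0
  | u, b :: d => sgn (η (u, b)) + sgnSum η (step u b) d

lemma weightOf_wEta (ε : ℝ) (η : V × Bool → Bool) (u : V) (d : List Bool) :
    weightOf (wEta ε η) u d = d.length + ε * sgnSum η u d := by
  induction d generalizing u with
  | nil => simp [weightOf, sgnSum]
  | cons b d ih =>
      rw [weightOf, sgnSum, ih, wEta_step, valOf_eq]
      push_cast [List.length_cons]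
      ring

lemma sgnSum_ge (η : V × Bool → Bool) (u : V) (d : List Bool) :
    -(d.length : ℝ) ≤ sgnSum η u d := by
  induction d generalizing u with
  | nil => simp [sgnSum]
  | cons b d ih =>
      rw [sgnSum]
      have h1 : (-1 : ℝ) ≤ sgn (η (u, b)) := by
        rcases η (u, b) with _ | _ <;> simp [sgn]
      have h2 := ih (step u b)
      push_cast [List.length_cons]
      linarith

lemma sgnSum_append (η : V × Bool → Bool) (u : V) (d1 d2 : List Bool) :
    sgnSum η u (d1 ++ d2) = sgnSum η u d1 + sgnSum η (endOf u d1) d2 := by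
  induction d1 generalizing u with
  | nil => simp [sgnSum, endOf]
  | cons b d ih => rw [List.cons_append, sgnSum, sgnSum, ih, endOf]; ring

def eshift (t : V) (e : V × Bool) : V × Bool := ((e.1.1 + t.1, e.1.2 + t.2), e.2)

lemma eshift_injective (t : V) : Function.Injective (eshift t) := by
  rintro ⟨⟨a, b⟩, c⟩ ⟨⟨a', b'⟩, c'⟩ h
  simp only [eshift, Prod.mk.injEq] at h
  obtain ⟨⟨h1, h2⟩, h3⟩ := h
  simp only [Prod.mk.injEq]
  refine ⟨⟨by omega, by omega⟩, h3⟩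

lemma sgnSum_shift (η : V × Bool → Bool) (t u : V) (d : List Bool) :
    sgnSum η (u.1 + t.1, u.2 + t.2) d = sgnSum (fun e => η (eshift t e)) u d := by
  induction d generalizing u with
  | nil => simp [sgnSum]
  | cons b d ih =>
      have hstep : step (u.1 + t.1, u.2 + t.2) b = ((step u b).1 + t.1, (step u b).2 + t.2) := by
        cases b <;> simp [step, Prod.ext_iff] <;> ring
      rw [sgnSum, sgnSum, hstep, ih (step u b)]
      rfl

noncomputable def box (m : ℕ) : Finset (V × Bool) :=
  (Finset.Icc ((0 : ℤ), (0 : ℤ)) ((m : ℤ), (m : ℤ))) ×ˢ (Finset.univ : Finset Bool)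

lemma mem_box {m : ℕ} {e : V × Bool} :
    e ∈ box m ↔ 0 ≤ e.1.1 ∧ 0 ≤ e.1.2 ∧ e.1.1 ≤ (m : ℤ) ∧ e.1.2 ≤ (m : ℤ) := by
  simp [box, Finset.mem_product, Finset.mem_Icc, Prod.le_def]
  tauto

lemma box_mono {m n : ℕ} (h : m ≤ n) : box m ⊆ box n := by
  intro e he
  rw [mem_box] at he ⊢
  have : (m : ℤ) ≤ n := by exact_mod_cast h
  omega

lemma sgnSum_congr {η η' : V × Bool → Bool} (m : ℤ)
    (hw : ∀ x : V, ∀ b : Bool, 0 ≤ x.1 → 0 ≤ x.2 → x.1 ≤ m → x.2 ≤ m → η (x, b) = η' (x, b)) :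
    ∀ (d : List Bool) (u : V), 0 ≤ u.1 → 0 ≤ u.2 →
      u.1 + d.count true ≤ m → u.2 + d.count false ≤ m →
      sgnSum η u d = sgnSum η' u d := by
  intro d
  induction d with
  | nil => intro u _ _ _ _; simp [sgnSum]
  | cons b d ih =>
      intro u h1 h2 h3 h4
      cases b <;> simp [List.count_cons] at h3 h4 <;>
      · rw [sgnSum, sgnSum, hw u _ h1 h2 (by omega) (by omega)]
        congr 1
        apply ih <;> simp [step] <;> omega

lemma weightOf_congr {w w' : V → V → ℝ} (m : ℤ)
    (hw : ∀ x : V, ∀ b : Bool, 0 ≤ x.1 → 0 ≤ x.2 → x.1 ≤ m → x.2 ≤ m →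
      w x (step x b) = w' x (step x b)) :
    ∀ (d : List Bool) (u : V), 0 ≤ u.1 → 0 ≤ u.2 →
      u.1 + d.count true ≤ m → u.2 + d.count false ≤ m →
      weightOf w u d = weightOf w' u d := by
  intro d
  induction d with
  | nil => intro u _ _ _ _; simp [weightOf]
  | cons b d ih =>
      intro u h1 h2 h3 h4
      cases b <;> simp [List.count_cons] at h3 h4 <;>
      · rw [weightOf, weightOf, hw u _ h1 h2 (by omega) (by omega)]
        congr 1
        apply ih <;> simp [step] <;> omega

noncomputable def minS (m : ℕ) (η : V × Bool → Bool) : ℝ :=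
  ((PathsF (m + m) m).image (sgnSum η (0, 0))).min' ((PathsF_nonempty m m).image _)

lemma count_false_of_mem_PathsF {m : ℕ} {d : List Bool} (hd : d ∈ PathsF (m + m) m) :
    d.count false = m := by
  rw [mem_PathsF] at hd
  have := count_true_add_count_false d
  omega

lemma minS_congr {m : ℕ} {η η' : V × Bool → Bool}
    (h : ∀ e ∈ box m, η e = η' e) : minS m η = minS m η' := by
  unfold minS
  congr 1
  apply Finset.image_congr
  intro d hd
  have hdm : d ∈ PathsF (m + m) m := hd
  have hf := count_false_of_mem_PathsF hdm
  rw [mem_PathsF] at hdm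
  apply sgnSum_congr (m : ℤ)
    (fun x b hx1 hx2 hx3 hx4 => h (x, b) (mem_box.2 ⟨hx1, hx2, hx3, hx4⟩)) d (0, 0)
  · simp
  · simp
  · simp [hdm.2]
  · simp [hf]

lemma minS_le_sum (m n : ℕ) (η : V × Bool → Bool) :
    minS (m + n) η ≤ minS m η + minS n (fun e => η (eshift ((m : ℤ), (m : ℤ)) e)) := by
  obtain ⟨c1, hc1mem, hc1⟩ := Finset.mem_image.1 (Finset.min'_mem
    ((PathsF (m + m) m).image (sgnSum η (0, 0))) ((PathsF_nonempty m m).image _))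
  obtain ⟨c2, hc2mem, hc2⟩ := Finset.mem_image.1 (Finset.min'_mem
    ((PathsF (n + n) n).image (sgnSum (fun e => η (eshift ((m : ℤ), (m : ℤ)) e)) (0, 0)))
    ((PathsF_nonempty n n).image _))
  have hmem : c1 ++ c2 ∈ PathsF ((m + n) + (m + n)) (m + n) := by
    rw [mem_PathsF] at *
    rw [List.length_append, List.count_append]
    omega
  have hend : endOf (0, 0) c1 = ((m : ℤ), (m : ℤ)) := by
    rw [endOf_eq]
    have hf := count_false_of_mem_PathsF hc1mem
    rw [mem_PathsF] at hc1mem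
    simp [hf, hc1mem.2]
  have hle : minS (m + n) η ≤ sgnSum η (0, 0) (c1 ++ c2) :=
    Finset.min'_le _ _ (Finset.mem_image_of_mem _ hmem)
  rw [sgnSum_append, hend] at hle
  have : sgnSum η ((m : ℤ), (m : ℤ)) c2
      = sgnSum (fun e => η (eshift ((m : ℤ), (m : ℤ)) e)) (0, 0) c2 := by
    have := sgnSum_shift η ((m : ℤ), (m : ℤ)) (0, 0) c2
    simpa using this
  rw [this] at hle
  unfold minS
  rw [← hc1, ← hc2]
  exact hle

lemma minS_ge (m : ℕ) (η : V × Bool → Bool) : -(2 * m : ℝ) ≤ minS m η := by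
  apply Finset.le_min'
  intro y hy
  obtain ⟨d, hd, rfl⟩ := Finset.mem_image.1 hy
  rw [mem_PathsF] at hd
  have := sgnSum_ge η (0, 0) d
  rw [hd.1] at this
  push_cast at this ⊢
  linarith

lemma min'_image_affine {s : Finset (List Bool)} (hs : s.Nonempty)
    (g f : List Bool → ℝ) (c ε : ℝ) (hε : 0 ≤ ε)
    (hgf : ∀ d ∈ s, g d = c + ε * f d) :
    (s.image g).min' (hs.image _) = c + ε * (s.image f).min' (hs.image _) := by
  apply le_antisymm
  · obtain ⟨d, hd, hfd⟩ := Finset.mem_image.1 (Finset.min'_mem (s.image f) (hs.image _))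
    calc (s.image g).min' (hs.image _) ≤ g d := Finset.min'_le _ _ (Finset.mem_image_of_mem _ hd)
    _ = c + ε * f d := hgf d hd
    _ = c + ε * (s.image f).min' (hs.image _) := by rw [hfd]
  · apply Finset.le_min'
    intro y hy
    obtain ⟨d, hd, rfl⟩ := Finset.mem_image.1 hy
    rw [hgf d hd]
    have : (s.image f).min' (hs.image _) ≤ f d := Finset.min'_le _ _ (Finset.mem_image_of_mem _ hd)
    nlinarith

noncomputable def avg {α : Type} [Fintype α] [DecidableEq α] (g : (α → Bool) → ℝ) : ℝ :=
  (∑ η : α → Bool, g η) / 2 ^ (Fintype.card α)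

lemma avg_le_avg {α : Type} [Fintype α] [DecidableEq α] {g h : (α → Bool) → ℝ} (hle : ∀ η, g η ≤ h η) :
    avg g ≤ avg h := by
  unfold avg
  exact div_le_div_of_nonneg_right (Finset.sum_le_sum (fun η _ => hle η)) (by positivity)

lemma le_avg {α : Type} [Fintype α] [DecidableEq α] {c : ℝ} {g : (α → Bool) → ℝ} (h : ∀ η, c ≤ g η) :
    c ≤ avg g := by
  unfold avg
  rw [le_div_iff₀ (by positivity)]
  calc c * 2 ^ Fintype.card α = ∑ _η : α → Bool, c := by
        rw [Finset.sum_const, Finset.card_univ, Fintype.card_fun]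
        simp [mul_comm]
  _ ≤ ∑ η : α → Bool, g η := Finset.sum_le_sum (fun η _ => h η)

lemma avg_add {α : Type} [Fintype α] [DecidableEq α] (g h : (α → Bool) → ℝ) :
    avg (fun η => g η + h η) = avg g + avg h := by
  unfold avg
  rw [Finset.sum_add_distrib, add_div]

lemma avg_affine {α : Type} [Fintype α] [DecidableEq α] (c ε : ℝ) (g : (α → Bool) → ℝ) :
    avg (fun η => c + ε * g η) = c + ε * avg g := by
  unfold avg
  rw [Finset.sum_add_distrib, ← Finset.mul_sum, Finset.sum_const, Finset.card_univ,
    Fintype.card_fun, Fintype.card_bool]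
  have : (0:ℝ) < 2 ^ Fintype.card α := by positivity
  field_simp
  ring

lemma avg_comp {α β : Type} [Fintype α] [Fintype β] [DecidableEq α] [DecidableEq β] {i : α → β} (hi : Function.Injective i)
    (g : (α → Bool) → ℝ) : avg (fun η : β → Bool => g (η ∘ i)) = avg g := by
  classical
  let γ := ((Set.range i)ᶜ : Set β)
  let e : β ≃ α ⊕ γ := ((Equiv.Set.sumCompl (Set.range i)).symm.trans
    (Equiv.sumCongr (Equiv.ofInjective i hi).symm (Equiv.refl _)))
  let E : (β → Bool) ≃ (α → Bool) × (γ → Bool) :=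
    (e.arrowCongr (Equiv.refl Bool)).trans (Equiv.sumArrowEquivProdArrow _ _ _)
  have hE : ∀ η : β → Bool, (E η).1 = η ∘ i := by
    intro η; funext a
    simp [E, e, Equiv.sumArrowEquivProdArrow, Equiv.arrowCongr, Equiv.Set.sumCompl, Equiv.sumCompl_apply_inl]
    rfl
  have hcard : Fintype.card β = Fintype.card α + Fintype.card γ := by
    rw [← Fintype.card_sum]; exact Fintype.card_congr e
  calc avg (fun η : β → Bool => g (η ∘ i))
      = (∑ p : (α → Bool) × (γ → Bool), g p.1) / 2 ^ (Fintype.card β) := by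
        unfold avg
        congr 1
        rw [← Equiv.sum_comp E (fun p => g p.1)]
        exact Finset.sum_congr rfl (fun η _ => by rw [hE η])
    _ = ((∑ ζ : α → Bool, g ζ) * 2 ^ Fintype.card γ) / 2 ^ Fintype.card β := by
        rw [Fintype.sum_prod_type]
        congr 1
        rw [Finset.sum_mul]
        apply Finset.sum_congr rfl
        intro x _
        simp [Finset.sum_const, Finset.card_univ, Fintype.card_fun, Fintype.card_bool,
          nsmul_eq_mul, mul_comm]
    _ = avg g := by
        rw [hcard, pow_add]
        unfold avg
        have h2 : ((2:ℝ) ^ Fintype.card γ) ≠ 0 := by positivity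
        field_simp

noncomputable def extb (m : ℕ) (η : ↥(box m) → Bool) : V × Bool → Bool :=
  fun e => if h : e ∈ box m then η ⟨e, h⟩ else false

noncomputable def Am (m : ℕ) : ℝ := avg (fun η : ↥(box m) → Bool => minS m (extb m η))

lemma Am_subadd : Subadditive Am := by
  intro m n
  have hsub : box m ⊆ box (m + n) := box_mono (Nat.le_add_right m n)
  have hshift : ∀ e : V × Bool, e ∈ box n → eshift ((m : ℤ), (m : ℤ)) e ∈ box (m + n) := by
    intro e he
    rw [mem_box] at he ⊢
    simp only [eshift]
    push_cast
    omega
  set i1 : ↥(box m) → ↥(box (m + n)) := fun e => ⟨e.1, hsub e.2⟩ with hi1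
  have hi1inj : Function.Injective i1 := by
    intro a b h
    have h' := congrArg Subtype.val h
    exact Subtype.ext h'
  set i2 : ↥(box n) → ↥(box (m + n)) :=
    fun e => ⟨eshift ((m : ℤ), (m : ℤ)) e.1, hshift e.1 e.2⟩ with hi2
  have hi2inj : Function.Injective i2 := by
    intro a b h
    have h' := congrArg Subtype.val h
    exact Subtype.ext (eshift_injective _ h')
  have key : ∀ η : ↥(box (m + n)) → Bool,
      minS (m + n) (extb (m + n) η) ≤
        (fun η' : ↥(box m) → Bool => minS m (extb m η')) (η ∘ i1) +
        (fun η' : ↥(box n) → Bool => minS n (extb n η')) (η ∘ i2) := by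
    intro η
    have e1 : minS m (extb (m + n) η) = minS m (extb m (η ∘ i1)) := by
      apply minS_congr
      intro e he
      simp only [extb, Function.comp_apply, dif_pos he, dif_pos (hsub he), hi1]
    have e2 : minS n (fun e => extb (m + n) η (eshift ((m : ℤ), (m : ℤ)) e))
        = minS n (extb n (η ∘ i2)) := by
      apply minS_congr
      intro e he
      simp only [extb, Function.comp_apply, dif_pos he, dif_pos (hshift e he), hi2]
    calc minS (m + n) (extb (m + n) η)
        ≤ minS m (extb (m + n) η)
          + minS n (fun e => extb (m + n) η (eshift ((m : ℤ), (m : ℤ)) e)) :=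
          minS_le_sum m n _
      _ = _ := by rw [e1, e2]
  calc Am (m + n)
      ≤ avg (fun η : ↥(box (m + n)) → Bool =>
          (fun η' : ↥(box m) → Bool => minS m (extb m η')) (η ∘ i1) +
          (fun η' : ↥(box n) → Bool => minS n (extb n η')) (η ∘ i2)) := avg_le_avg key
    _ = avg (fun η : ↥(box (m + n)) → Bool =>
          (fun η' : ↥(box m) → Bool => minS m (extb m η')) (η ∘ i1)) +
        avg (fun η : ↥(box (m + n)) → Bool =>
          (fun η' : ↥(box n) → Bool => minS n (extb n η')) (η ∘ i2)) := avg_add _ _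
    _ = Am m + Am n := by
          rw [avg_comp hi1inj (fun η' : ↥(box m) → Bool => minS m (extb m η')),
            avg_comp hi2inj (fun η' : ↥(box n) → Bool => minS n (extb n η'))]
          rfl

lemma Am_ge (m : ℕ) : -(2 * m : ℝ) ≤ Am m := le_avg (fun η => minS_ge m _)

lemma PathsF_two_one : PathsF 2 1 = {[true, false], [false, true]} := by
  ext d
  rw [mem_PathsF]
  constructor
  · rintro ⟨h1, h2⟩
    match d, h1 with
    | [a, b], _ =>
      cases a <;> cases b <;> simp_all
  · rintro h
    rcases Finset.mem_insert.1 h with rfl | h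
    · simp
    · rw [Finset.mem_singleton.1 h]; simp

lemma min'_eq_of_eq {s t : Finset ℝ} (h : s = t) (hs : s.Nonempty) :
    s.min' hs = t.min' (h ▸ hs) := by subst h; rfl

lemma minS_one (η : V × Bool → Bool) :
    minS 1 η = min (sgn (η (((0:ℤ), (0:ℤ)), true)) + sgn (η (((1:ℤ), (0:ℤ)), false)))
      (sgn (η (((0:ℤ), (0:ℤ)), false)) + sgn (η (((0:ℤ), (1:ℤ)), true))) := by
  have himg : (PathsF (1 + 1) 1).image (sgnSum η ((0:ℤ), (0:ℤ)))
      = insert (sgnSum η ((0:ℤ), (0:ℤ)) ([true, false]))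
          ({sgnSum η ((0:ℤ), (0:ℤ)) ([false, true])} : Finset ℝ) := by
    have hp : PathsF (1 + 1) 1 = insert ([true, false]) ({[false, true]} : Finset (List Bool)) :=
      PathsF_two_one
    rw [hp, Finset.image_insert, Finset.image_singleton]
  unfold minS
  rw [min'_eq_of_eq himg, Finset.min'_insert _ _ (Finset.singleton_nonempty _), Finset.min'_singleton]
  congr 1 <;> · simp [sgnSum, step]; try norm_num

def E0 : V × Bool := (((0:ℤ), (0:ℤ)), true)
def E1 : V × Bool := (((1:ℤ), (0:ℤ)), false)
def E2 : V × Bool := (((0:ℤ), (0:ℤ)), false)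
def E3 : V × Bool := (((0:ℤ), (1:ℤ)), true)

lemma hE0 : E0 ∈ box 1 := mem_box.2 (by norm_num [E0])
lemma hE1 : E1 ∈ box 1 := mem_box.2 (by norm_num [E1])
lemma hE2 : E2 ∈ box 1 := mem_box.2 (by norm_num [E2])
lemma hE3 : E3 ∈ box 1 := mem_box.2 (by norm_num [E3])

def i4 : Fin 4 → ↥(box 1) := ![⟨E0, hE0⟩, ⟨E1, hE1⟩, ⟨E2, hE2⟩, ⟨E3, hE3⟩]

lemma i4_inj : Function.Injective i4 := by
  intro a b h
  fin_cases a <;> fin_cases b <;> simp_all [i4, E0, E1, E2, E3, Subtype.ext_iff, Prod.ext_iff]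

noncomputable def g4 : (Fin 4 → Bool) → ℝ :=
  fun ζ => min (sgn (ζ 0) + sgn (ζ 1)) (sgn (ζ 2) + sgn (ζ 3))

lemma Am_one : Am 1 = -(3 / 4 : ℝ) := by
  have h1 : (fun η : ↥(box 1) → Bool => minS 1 (extb 1 η)) = fun η => g4 (η ∘ i4) := by
    funext η
    rw [minS_one]
    simp only [g4, i4, Function.comp_apply, Matrix.cons_val_zero, Matrix.cons_val_one,
      Matrix.head_cons, Matrix.cons_val_two, Matrix.tail_cons, Matrix.cons_val_three]
    have v0 : extb 1 η E0 = η ⟨E0, hE0⟩ := dif_pos hE0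
    have v1 : extb 1 η E1 = η ⟨E1, hE1⟩ := dif_pos hE1
    have v2 : extb 1 η E2 = η ⟨E2, hE2⟩ := dif_pos hE2
    have v3 : extb 1 η E3 = η ⟨E3, hE3⟩ := dif_pos hE3
    rw [show (((0:ℤ), (0:ℤ)), true) = E0 from rfl, show (((1:ℤ), (0:ℤ)), false) = E1 from rfl,
      show (((0:ℤ), (0:ℤ)), false) = E2 from rfl, show (((0:ℤ), (1:ℤ)), true) = E3 from rfl,
      v0, v1, v2, v3]
  have h2 : Am 1 = avg g4 := by
    rw [Am, h1, avg_comp i4_inj g4]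
  rw [h2]
  have hbij : Function.Bijective
      (fun q : Bool × Bool × Bool × Bool => (![q.1, q.2.1, q.2.2.1, q.2.2.2] : Fin 4 → Bool)) := by
    decide
  have hsum : ∑ ζ : Fin 4 → Bool, g4 ζ = -12 := by
    rw [← Fintype.sum_bijective _ hbij _ g4 (fun q => rfl)]
    simp only [Fintype.sum_prod_type, Fintype.sum_bool]
    simp only [g4, Matrix.cons_val_zero, Matrix.cons_val_one, Matrix.head_cons,
      Matrix.cons_val_two, Matrix.tail_cons, Matrix.cons_val_three, sgn]
    norm_num [min_def]
  rw [avg, hsum]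
  norm_num

noncomputable def Lc : ℝ := Am_subadd.lim

lemma bddBelow_Am : BddBelow (Set.range fun n : ℕ => Am n / n) := by
  refine ⟨-2, ?_⟩
  rintro x ⟨n, rfl⟩
  rcases Nat.eq_zero_or_pos n with rfl | hn
  · simp
  · have h1 := Am_ge n
    have h2 : (0 : ℝ) < n := by exact_mod_cast hn
    rw [le_div_iff₀ h2]
    linarith

lemma Lc_le : Lc ≤ -(3 / 4 : ℝ) := by
  have := Am_subadd.lim_le_div bddBelow_Am (n := 1) one_ne_zero
  rw [Am_one] at this
  simpa [Lc] using this

lemma Lc_ge : (-2 : ℝ) ≤ Lc := by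
  have ht := Am_subadd.tendsto_lim bddBelow_Am
  apply ge_of_tendsto ht
  filter_upwards [Filter.eventually_ge_atTop 1] with n hn
  rcases Nat.eq_zero_or_pos n with rfl | hpos
  · omega
  · have h1 := Am_ge n
    have h2 : (0 : ℝ) < n := by exact_mod_cast hpos
    rw [le_div_iff₀ h2]
    linarith

noncomputable def epsStar : ℝ := (2 - Real.sqrt 2) / (-Lc)

lemma sqrt2_lt : Real.sqrt 2 < 2 ∧ (5 / 4 : ℝ) ≤ Real.sqrt 2 := by
  have hs : Real.sqrt 2 ^ 2 = 2 := Real.sq_sqrt (by norm_num)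
  have hs0 : 0 ≤ Real.sqrt 2 := Real.sqrt_nonneg 2
  constructor <;> nlinarith

lemma Lc_neg : 0 < -Lc := by have := Lc_le; linarith

lemma epsStar_mem : epsStar ∈ Set.Icc (0 : ℝ) 1 := by
  have h1 := sqrt2_lt
  have h2 := Lc_neg
  have h3 := Lc_le
  unfold epsStar
  constructor
  · apply div_nonneg (by linarith) (by linarith)
  · rw [div_le_one h2]; linarith

lemma epsStar_pos : 0 < epsStar := by
  have h1 := sqrt2_lt
  exact div_pos (by linarith) Lc_neg

lemma epsStar_eq : 2 + epsStar * Lc = Real.sqrt 2 := by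
  have h2 := Lc_neg
  have h3 : Lc ≠ 0 := by linarith
  rw [epsStar]
  field_simp
  ring

section Prob

variable {Ω : Type} [MeasurableSpace Ω] {μ : Measure Ω} [IsProbabilityMeasure μ]

lemma two_point (X : Ω → ℝ) (hX : Measurable X) {a b : ℝ} (hab : a ≠ b)
    (ha : μ {ω | X ω = a} = 1 / 2) (hb : μ {ω | X ω = b} = 1 / 2) :
    Integrable X μ ∧ ∫ ω, X ω ∂μ = (a + b) / 2 := by
  set A := {ω | X ω = a} with hAdef
  set B := {ω | X ω = b} with hBdef
  have hAm : MeasurableSet A := hX (measurableSet_singleton a)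
  have hBm : MeasurableSet B := hX (measurableSet_singleton b)
  have hdisj : Disjoint A B := by
    rw [Set.disjoint_left]
    intro ω hA hB
    have h1 : X ω = a := hA
    have h2 : X ω = b := hB
    exact hab (h1.symm.trans h2)
  have hcov : μ (A ∪ B)ᶜ = 0 := by
    have h1 : μ (A ∪ B) = 1 := by
      rw [measure_union hdisj hBm, ha, hb]
      simp only [one_div]
      exact ENNReal.inv_two_add_inv_two
    rw [measure_compl (hAm.union hBm) (measure_ne_top μ _), h1, measure_univ, tsub_self]
  set f : Ω → ℝ := fun ω => A.indicator (fun _ => a) ω + B.indicator (fun _ => b) ω with hfdef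
  have hae : X =ᵐ[μ] f := by
    rw [Filter.EventuallyEq, ae_iff]
    apply measure_mono_null _ hcov
    intro ω hω
    simp only [Set.mem_setOf_eq] at hω
    simp only [Set.mem_compl_iff, Set.mem_union]
    rintro (hA | hB)
    · apply hω
      have hnB : ω ∉ B := fun hB => (Set.disjoint_left.1 hdisj) hA hB
      simp only [hfdef, Set.indicator_of_mem hA, Set.indicator_of_notMem hnB, add_zero]
      exact hA
    · apply hω
      have hnA : ω ∉ A := fun hA => (Set.disjoint_left.1 hdisj) hA hB
      simp only [hfdef, Set.indicator_of_mem hB, Set.indicator_of_notMem hnA, zero_add]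
      exact hB
  have hint1 : Integrable (A.indicator (fun _ => a)) μ := (integrable_const a).indicator hAm
  have hint2 : Integrable (B.indicator (fun _ => b)) μ := (integrable_const b).indicator hBm
  refine ⟨(hint1.add hint2).congr hae.symm, ?_⟩
  rw [integral_congr_ae hae]
  rw [hfdef]
  rw [integral_add hint1 hint2, integral_indicator_const _ hAm, integral_indicator_const _ hBm,
    measureReal_def, measureReal_def, ha, hb]
  rw [ENNReal.toReal_div]
  norm_num
  ring

lemma valOf_ne {ε : ℝ} (hε : ε ≠ 0) {b b' : Bool} (h : valOf ε b = valOf ε b') : b = b' := by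
  cases b <;> cases b'
  · rfl
  · exfalso
    apply hε
    have h2 : (1:ℝ) - ε = 1 + ε := by simpa [valOf] using h
    linarith
  · exfalso
    apply hε
    have h2 : (1:ℝ) + ε = 1 - ε := by simpa [valOf] using h
    linarith
  · rfl

lemma integral_eq_avg (X : V × Bool → Ω → ℝ) (hmeas : ∀ e, Measurable (X e))
    (hind : iIndepFun X μ)
    {ε : ℝ} (hε : ε ≠ 0)
    (hdist : ∀ e, μ {ω | X e ω = 1 - ε} = 1 / 2 ∧ μ {ω | X e ω = 1 + ε} = 1 / 2)
    (s : Finset (V × Bool)) (g : Ω → ℝ) (h : (↥s → Bool) → ℝ)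
    (hg : ∀ (ω : Ω) (η : ↥s → Bool), (∀ e : ↥s, X e.1 ω = valOf ε (η e)) → g ω = h η) :
    ∫ ω, g ω ∂μ = avg h := by
  classical
  set exts : (↥s → Bool) → (V × Bool) → Bool :=
    fun η e => if hmem : e ∈ s then η ⟨e, hmem⟩ else true with hexts
  set A : (↥s → Bool) → Set Ω :=
    fun η => ⋂ e ∈ s, X e ⁻¹' {valOf ε (exts η e)} with hA
  have mem_A : ∀ (η : ↥s → Bool) (ω : Ω),
      ω ∈ A η ↔ ∀ e : ↥s, X e.1 ω = valOf ε (η e) := by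
    intro η ω
    simp only [hA, Set.mem_iInter, Set.mem_preimage, Set.mem_singleton_iff, hexts]
    constructor
    · rintro hmem ⟨e, he⟩
      have := hmem e he
      rwa [dif_pos he] at this
    · intro hmem e he
      rw [dif_pos he]
      exact hmem ⟨e, he⟩
  have hAmeas : ∀ η, MeasurableSet (A η) := by
    intro η
    simp only [hA]
    exact Finset.measurableSet_biInter s
      (fun e _ => (hmeas e) (measurableSet_singleton _))
  have hmuA : ∀ η, μ (A η) = (1 / 2 : ENNReal) ^ s.card := by
    intro η
    simp only [hA]
    rw [hind.measure_inter_preimage_eq_mul s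
      (sets := fun e => {valOf ε (exts η e)}) (fun i _ => measurableSet_singleton _)]
    rw [← Finset.prod_const]
    apply Finset.prod_congr rfl
    intro e _
    have hpre : X e ⁻¹' {valOf ε (exts η e)} = {ω | X e ω = valOf ε (exts η e)} := rfl
    rw [hpre]
    cases hc : exts η e
    · simpa [valOf] using (hdist e).1
    · simpa [valOf] using (hdist e).2
  have hdisj : Pairwise (Function.onFun Disjoint A) := by
    intro η η' hne
    rw [Function.onFun, Set.disjoint_left]
    intro ω hω hω'
    apply hne
    funext e
    have h1 := (mem_A η ω).1 hω e
    have h2 := (mem_A η' ω).1 hω' e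
    exact valOf_ne hε (h1 ▸ h2 ▸ rfl)
  have hU : μ (⋃ η, A η) = 1 := by
    rw [measure_iUnion hdisj hAmeas, tsum_fintype]
    simp only [hmuA, Finset.sum_const, Finset.card_univ, Fintype.card_fun, Fintype.card_bool,
      Fintype.card_coe, nsmul_eq_mul]
    rw [Nat.cast_pow, ← mul_pow]
    norm_num
    rw [ENNReal.mul_inv_cancel (by norm_num) (by norm_num), one_pow]
  have hcompl : μ (⋃ η, A η)ᶜ = 0 := by
    rw [measure_compl (MeasurableSet.iUnion hAmeas) (measure_ne_top μ _), hU, measure_univ,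
      tsub_self]
  have hae : g =ᵐ[μ] fun ω => ∑ η : ↥s → Bool, (A η).indicator (fun _ => h η) ω := by
    rw [Filter.EventuallyEq, ae_iff]
    apply measure_mono_null _ hcompl
    intro ω hω
    simp only [Set.mem_setOf_eq] at hω
    simp only [Set.mem_compl_iff, Set.mem_iUnion, not_exists]
    intro η0 hη0
    apply hω
    rw [Finset.sum_eq_single η0]
    · rw [Set.indicator_of_mem hη0]
      exact hg ω η0 ((mem_A η0 ω).1 hη0)
    · intro η _ hne
      apply Set.indicator_of_notMem
      intro hmem'
      exact (Set.disjoint_right.1 (hdisj hne)) hη0 hmem'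
    · intro habs
      exact absurd (Finset.mem_univ η0) habs
  rw [integral_congr_ae hae, integral_finset_sum _
    (fun η _ => (integrable_const (h η)).indicator (hAmeas η))]
  have : ∀ η, ∫ ω, (A η).indicator (fun _ => h η) ω ∂μ = ((1 / 2 : ℝ) ^ s.card) * h η := by
    intro η
    rw [integral_indicator_const _ (hAmeas η), measureReal_def, hmuA η, smul_eq_mul]
    congr 1
    rw [ENNReal.toReal_pow, ENNReal.toReal_div]
    norm_num
  simp only [this]
  rw [← Finset.mul_sum, avg, Fintype.card_coe, one_div, inv_pow, inv_mul_eq_div]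

end Prob

lemma monoDist_eq' (w : V → V → ℝ) (a b : ℕ) :
    monoDist w (0, 0) ((a : ℤ), (b : ℤ)) =
      ((PathsF (a + b) a).image (weightOf w (0, 0))).min' ((PathsF_nonempty a b).image _) := by
  rw [monoDist_eq w (0, 0) ((a : ℤ), (b : ℤ)) (by simp) (by simp)]
  have himg : (PathsF ((((a : ℤ), (b : ℤ)).1 - (0, 0).1).toNat
        + (((a : ℤ), (b : ℤ)).2 - (0, 0).2).toNat) ((((a : ℤ), (b : ℤ)).1 - (0, 0).1).toNat)).image
          (weightOf w (0, 0))
      = (PathsF (a + b) a).image (weightOf w (0, 0)) := by norm_num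
  exact min'_eq_of_eq himg _

lemma PathsF_row (m : ℕ) : PathsF (m + 0) m = {List.replicate m true} := by
  ext d
  rw [mem_PathsF, Finset.mem_singleton]
  constructor
  · rintro ⟨h1, h2⟩
    rw [List.eq_replicate_iff]
    refine ⟨by omega, ?_⟩
    intro b hb
    cases b
    · exfalso
      have hcount := count_true_add_count_false d
      have : d.count false = 0 := by omega
      rw [List.count_eq_zero] at this
      exact this hb
    · rfl
  · rintro rfl
    simp

lemma weightOf_replicate (w : V → V → ℝ) (m : ℕ) :
    ∀ u : V, weightOf w u (List.replicate m true)
      = ∑ i ∈ Finset.range m, w (u.1 + (i : ℤ), u.2) (u.1 + (i : ℤ) + 1, u.2) := by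
  induction m with
  | zero => intro u; simp [weightOf]
  | succ k ih =>
      intro u
      rw [List.replicate_succ, weightOf, ih (step u true), Finset.sum_range_succ']
      rw [add_comm (w u (step u true))]
      congr 1
      · apply Finset.sum_congr rfl
        intro i _
        have h1 : ((step u true).1 + (i : ℤ), (step u true).2)
            = (u.1 + ((i + 1 : ℕ) : ℤ), u.2) := by
          simp [step, Prod.ext_iff]
          push_cast
          ring
        have h2 : ((step u true).1 + (i : ℤ) + 1, (step u true).2)
            = (u.1 + ((i + 1 : ℕ) : ℤ) + 1, u.2) := by
          simp [step, Prod.ext_iff]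
          push_cast
          ring
        rw [h1, h2]
      · have h1 : (u.1 + ((0 : ℕ) : ℤ), u.2) = u := by simp
        have h2 : (u.1 + ((0 : ℕ) : ℤ) + 1, u.2) = step u true := by simp [step]
        rw [h1, h2]

lemma monoDist_row (w : V → V → ℝ) (m : ℕ) :
    monoDist w (0, 0) ((m : ℤ), 0) = ∑ i ∈ Finset.range m, w ((i : ℤ), 0) ((i : ℤ) + 1, 0) := by
  have h0 : ((m : ℤ), (0 : ℤ)) = ((m : ℤ), ((0 : ℕ) : ℤ)) := rfl
  rw [h0, monoDist_eq' w m 0]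
  have himg : (PathsF (m + 0) m).image (weightOf w (0, 0))
      = {weightOf w (0, 0) (List.replicate m true)} := by
    rw [PathsF_row, Finset.image_singleton]
  rw [min'_eq_of_eq himg, Finset.min'_singleton, weightOf_replicate w m (0, 0)]
  apply Finset.sum_congr rfl
  intro i _
  norm_num

lemma monoDist_wEta_diag {ε : ℝ} (hε : 0 ≤ ε) (m : ℕ) (η : V × Bool → Bool) :
    monoDist (wEta ε η) (0, 0) ((m : ℤ), (m : ℤ)) = 2 * m + ε * minS m η := by
  rw [monoDist_eq' _ m m]
  rw [min'_image_affine (PathsF_nonempty m m) _ (sgnSum η (0, 0)) (2 * m) ε hε ?_]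
  · rfl
  · intro d hd
    rw [weightOf_wEta, (mem_PathsF.1 hd).1]
    push_cast
    ring

section Final

variable {Ω : Type} [MeasurableSpace Ω] {μ : Measure Ω} [IsProbabilityMeasure μ]

lemma integral_row (W : Ω → V → V → ℝ)
    (hmeas : ∀ e : V × Bool, Measurable fun ω => W ω (edgeOf e).1 (edgeOf e).2)
    {ε : ℝ} (hε : ε ≠ 0)
    (hdist : ∀ e : V × Bool,
      μ {ω | W ω (edgeOf e).1 (edgeOf e).2 = 1 - ε} = 1 / 2 ∧
      μ {ω | W ω (edgeOf e).1 (edgeOf e).2 = 1 + ε} = 1 / 2) (m : ℕ) :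
    (∫ ω, monoDist (W ω) (0, 0) ((m : ℤ), 0) ∂μ) = (m : ℝ) := by
  have hpt : ∀ ω, monoDist (W ω) (0, 0) ((m : ℤ), 0)
      = ∑ i ∈ Finset.range m, W ω ((i : ℤ), 0) ((i : ℤ) + 1, 0) := fun ω => monoDist_row (W ω) m
  simp only [hpt]
  have hkey : ∀ i : ℕ, Integrable (fun ω => W ω ((i : ℤ), 0) ((i : ℤ) + 1, 0)) μ ∧
      ∫ ω, W ω ((i : ℤ), 0) ((i : ℤ) + 1, 0) ∂μ = 1 := by
    intro i
    have hm : Measurable (fun ω => W ω ((i : ℤ), 0) ((i : ℤ) + 1, 0)) := by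
      simpa [edgeOf] using hmeas ((((i : ℤ), (0 : ℤ)), true))
    have hd1 : μ {ω | W ω ((i : ℤ), 0) ((i : ℤ) + 1, 0) = 1 - ε} = 1 / 2 := by
      simpa [edgeOf] using (hdist ((((i : ℤ), (0 : ℤ)), true))).1
    have hd2 : μ {ω | W ω ((i : ℤ), 0) ((i : ℤ) + 1, 0) = 1 + ε} = 1 / 2 := by
      simpa [edgeOf] using (hdist ((((i : ℤ), (0 : ℤ)), true))).2
    have hab : (1 - ε : ℝ) ≠ 1 + ε := by intro h; exact hε (by linarith)
    obtain ⟨hint, hval⟩ := two_point _ hm hab hd1 hd2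
    exact ⟨hint, by rw [hval]; ring⟩
  rw [integral_finset_sum _ (fun i _ => (hkey i).1)]
  rw [Finset.sum_congr rfl (fun i _ => (hkey i).2)]
  simp

lemma integral_diag (W : Ω → V → V → ℝ)
    (hmeas : ∀ e : V × Bool, Measurable fun ω => W ω (edgeOf e).1 (edgeOf e).2)
    (hind : iIndepFun
      (fun (e : V × Bool) ω => W ω (edgeOf e).1 (edgeOf e).2) μ)
    {ε : ℝ} (hε : 0 < ε)
    (hdist : ∀ e : V × Bool,
      μ {ω | W ω (edgeOf e).1 (edgeOf e).2 = 1 - ε} = 1 / 2 ∧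
      μ {ω | W ω (edgeOf e).1 (edgeOf e).2 = 1 + ε} = 1 / 2) (m : ℕ) :
    (∫ ω, monoDist (W ω) (0, 0) ((m : ℤ), (m : ℤ)) ∂μ) = 2 * m + ε * Am m := by
  have hg : ∀ (ω : Ω) (η : ↥(box m) → Bool),
      (∀ e : ↥(box m), W ω (edgeOf e.1).1 (edgeOf e.1).2 = valOf ε (η e)) →
      monoDist (W ω) (0, 0) ((m : ℤ), (m : ℤ)) = 2 * m + ε * minS m (extb m η) := by
    intro ω η hη
    rw [← monoDist_wEta_diag hε.le m (extb m η)]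
    rw [monoDist_eq' _ m m, monoDist_eq' _ m m]
    apply min'_eq_of_eq
    apply Finset.image_congr
    intro d hd
    have hdm : d ∈ PathsF (m + m) m := hd
    have hf := count_false_of_mem_PathsF hdm
    rw [mem_PathsF] at hdm
    apply weightOf_congr (m : ℤ) ?_ d (0, 0) (by simp) (by simp) (by simp [hdm.2]) (by simp [hf])
    intro x b hx1 hx2 hx3 hx4
    have hmem : (x, b) ∈ box m := mem_box.2 ⟨hx1, hx2, hx3, hx4⟩
    have h1 : W ω x (step x b) = valOf ε (η ⟨(x, b), hmem⟩) := by
      have h2 := hη ⟨(x, b), hmem⟩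
      cases b
      · exact h2
      · exact h2
    rw [h1, wEta_step]
    congr 1
    simp only [extb, dif_pos hmem]
  have hres := integral_eq_avg (fun (e : V × Bool) ω => W ω (edgeOf e).1 (edgeOf e).2)
    hmeas hind hε.ne' hdist (box m)
    (fun ω => monoDist (W ω) (0, 0) ((m : ℤ), (m : ℤ)))
    (fun η => 2 * m + ε * minS m (extb m η)) hg
  rw [hres, avg_affine]
  rfl

end Final

end S9

/-- There is `ε ∈ [0,1]` such that, whenever each edge of the grid
graph independently receives weight `1 - ε` or `1 + ε` with probability `1/2` each:
(i) for every `m ≥ 1`, `E[monodist_w((0,0),(m,0))] = m`; and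
(ii) `E[monodist_w((0,0),(m,m))] / m → √2` as `m → ∞`. -/
theorem stmt9 :
    ∃ ε : ℝ, ε ∈ Set.Icc (0 : ℝ) 1 ∧
      ∀ (Ω : Type) [MeasurableSpace Ω] (μ : Measure Ω) [IsProbabilityMeasure μ]
        (W : Ω → V → V → ℝ),
        (∀ ω u v, W ω u v = W ω v u) →
        (∀ e : V × Bool, Measurable fun ω => W ω (edgeOf e).1 (edgeOf e).2) →
        iIndepFun
          (fun (e : V × Bool) ω => W ω (edgeOf e).1 (edgeOf e).2) μ →
        (∀ e : V × Bool,
          μ {ω | W ω (edgeOf e).1 (edgeOf e).2 = 1 - ε} = 1 / 2 ∧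
          μ {ω | W ω (edgeOf e).1 (edgeOf e).2 = 1 + ε} = 1 / 2) →
        (∀ m : ℕ, 1 ≤ m →
            (∫ ω, monoDist (W ω) (0, 0) ((m : ℤ), 0) ∂μ) = (m : ℝ)) ∧
        Filter.Tendsto
          (fun m : ℕ => (∫ ω, monoDist (W ω) (0, 0) ((m : ℤ), (m : ℤ)) ∂μ) / (m : ℝ))
          Filter.atTop (nhds (Real.sqrt 2)) := by
  refine ⟨S9.epsStar, S9.epsStar_mem, ?_⟩
  intro Ω _ μ _ W _hsymm hmeas hind hdist
  constructor
  · intro m _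
    exact S9.integral_row W hmeas S9.epsStar_pos.ne' hdist m
  · have hval : ∀ m : ℕ, (∫ ω, monoDist (W ω) (0, 0) ((m : ℤ), (m : ℤ)) ∂μ)
        = 2 * m + S9.epsStar * S9.Am m :=
      fun m => S9.integral_diag W hmeas hind S9.epsStar_pos hdist m
    simp only [hval]
    have htend : Filter.Tendsto (fun m : ℕ => 2 + S9.epsStar * (S9.Am m / m))
        Filter.atTop (nhds (Real.sqrt 2)) := by
      have h1 := S9.Am_subadd.tendsto_lim S9.bddBelow_Am
      have h2 : Filter.Tendsto (fun m : ℕ => 2 + S9.epsStar * (S9.Am m / m))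
          Filter.atTop (nhds (2 + S9.epsStar * S9.Lc)) :=
        Filter.Tendsto.add tendsto_const_nhds (h1.const_mul S9.epsStar)
      rwa [S9.epsStar_eq] at h2
    apply Filter.Tendsto.congr' _ htend
    filter_upwards [Filter.eventually_ge_atTop 1] with m hm
    have hm0 : (m : ℝ) ≠ 0 := by
      have : (0 : ℝ) < m := by exact_mod_cast hm
      linarith
    field_simp
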